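/- For norms χ, χ' on a finite-dimensional vector space V and any p ∈ [1,∞), the p-distance satisfies the Pythagorean identity d_p(χ,χ')^p = d_p(χ, χ∧χ')^p + d_p(χ∧χ', χ')^p, where χ∧χ' is the pointwise minimum norm. -/

import Mathlib

open scoped ENNReal

noncomputable section
attribute [local instance] Classical.propDecidable

/-- An additive non-Archimedean norm on a vector space over a trivially valued field:
`χ : V → ℝ ∪ {+∞}` with `χ v = +∞` iff `v = 0`, invariance under nonzero scalars, and
the ultrametric inequality `χ(v+w) ≥ min (χ v) (χ w)`. -/
structure NAnorm (k V : Type*) [Field k] [AddCommGroup V] [Module k V] where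
  toFun : V → EReal
  ne_bot : ∀ v, toFun v ≠ ⊥
  top_iff : ∀ v, toFun v = ⊤ ↔ v = 0
  smul_eq : ∀ (a : k) (v : V), a ≠ 0 → toFun (a • v) = toFun v
  ultra : ∀ v w, min (toFun v) (toFun w) ≤ toFun (v + w)

namespace NAnorm

variable {k V : Type*} [Field k] [AddCommGroup V] [Module k V]

/-- A basis is `χ`-orthogonal if the norm of any linear combination is the minimum of the
norms of the basis vectors appearing with a nonzero coefficient. -/
def IsOrthogonal {N : ℕ} (χ : NAnorm k V) (b : Module.Basis (Fin N) k V) : Prop :=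
  ∀ a : Fin N → k, χ.toFun (∑ i, a i • b i) = ⨅ i ∈ {i | a i ≠ 0}, χ.toFun (b i)

/-- The real value of the norm (finite on nonzero vectors). -/
noncomputable def val (χ : NAnorm k V) (v : V) : ℝ := (χ.toFun v).toReal

/-- The pointwise minimum of two norms. -/
noncomputable def inf (χ χ' : NAnorm k V) : NAnorm k V where
  toFun v := min (χ.toFun v) (χ'.toFun v)
  ne_bot v h := by
    rcases min_cases (χ.toFun v) (χ'.toFun v) with ⟨h1, _⟩ | ⟨h1, _⟩
    · exact χ.ne_bot v (by rw [← h1]; exact h)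
    · exact χ'.ne_bot v (by rw [← h1]; exact h)
  top_iff v := by
    constructor
    · intro h
      have h1 : (⊤ : EReal) ≤ χ.toFun v := by rw [← h]; exact min_le_left _ _
      exact (χ.top_iff v).1 (le_antisymm le_top h1)
    · intro h
      show min (χ.toFun v) (χ'.toFun v) = ⊤
      rw [(χ.top_iff v).2 h, (χ'.top_iff v).2 h, min_self]
  smul_eq a v ha := by
    show min (χ.toFun (a • v)) (χ'.toFun (a • v)) = min (χ.toFun v) (χ'.toFun v)
    rw [χ.smul_eq a v ha, χ'.smul_eq a v ha]
  ultra v w := by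
    refine le_min ?_ ?_
    · exact le_trans (min_le_min (min_le_left _ _) (min_le_left _ _)) (χ.ultra v w)
    · exact le_trans (min_le_min (min_le_right _ _) (min_le_right _ _)) (χ'.ultra v w)

/-- The Goldman–Iwahori distance `d_∞(χ,χ') = sup_{v ≠ 0} |χ(v) - χ'(v)|`. -/
noncomputable def dInfty (χ χ' : NAnorm k V) : ℝ≥0∞ :=
  ⨆ v : {v : V // v ≠ 0}, ENNReal.ofReal |χ.val v.1 - χ'.val v.1|

/-- The distance `d_p(χ,χ')`, computed from the relative spectrum of `χ,χ'` in a joint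
orthogonal basis. -/
noncomputable def dp (p : ℝ) (χ χ' : NAnorm k V) : ℝ :=
  if h : ∃ b : Module.Basis (Fin (Module.finrank k V)) k V, χ.IsOrthogonal b ∧ χ'.IsOrthogonal b then
    ((Module.finrank k V : ℝ)⁻¹ *
      ∑ j, |χ.val (h.choose j) - χ'.val (h.choose j)| ^ p) ^ (1 / p)
  else 0

/-- The volume of a norm: the mean of its spectrum, computed in an orthogonal basis. -/
noncomputable def vol (χ : NAnorm k V) : ℝ :=
  if h : ∃ b : Module.Basis (Fin (Module.finrank k V)) k V, χ.IsOrthogonal b then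
    (Module.finrank k V : ℝ)⁻¹ * ∑ j, χ.val (h.choose j)
  else 0

end NAnorm

namespace NAnorm

variable {k V : Type*} [Field k] [AddCommGroup V] [Module k V]

lemma toFun_zero (χ : NAnorm k V) : χ.toFun 0 = ⊤ := (χ.top_iff 0).2 rfl

lemma toFun_neg (χ : NAnorm k V) (v : V) : χ.toFun (-v) = χ.toFun v := by
  have := χ.smul_eq (-1 : k) v (by simp)
  simpa using this

/-- Ultrametric equality: if the two norms differ, the norm of the sum is the min. -/
lemma ultra_eq (χ : NAnorm k V) {v w : V} (h : χ.toFun v ≠ χ.toFun w) :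
    χ.toFun (v + w) = min (χ.toFun v) (χ.toFun w) := by
  rcases lt_or_gt_of_ne h with hlt | hlt
  · -- χ v < χ w, so min = χ v
    rw [min_eq_left hlt.le]
    refine le_antisymm ?_ ?_
    · by_contra hc
      push_neg at hc
      have h1 : χ.toFun v = χ.toFun ((v + w) + (-w)) := by rw [add_neg_cancel_right]
      have h2 : min (χ.toFun (v + w)) (χ.toFun (-w)) ≤ χ.toFun v := by
        rw [h1]; exact χ.ultra _ _
      rw [χ.toFun_neg] at h2
      rcases min_le_iff.1 h2 with h3 | h3
      · exact absurd h3 (not_le.2 hc)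
      · exact absurd h3 (not_le.2 hlt)
    · have := χ.ultra v w
      rwa [min_eq_left hlt.le] at this
  · rw [min_eq_right hlt.le]
    have h1 : χ.toFun (w + v) = min (χ.toFun w) (χ.toFun v) := by
      rw [min_eq_left hlt.le]
      refine le_antisymm ?_ ?_
      · by_contra hc
        push_neg at hc
        have h1 : χ.toFun w = χ.toFun ((w + v) + (-v)) := by rw [add_neg_cancel_right]
        have h2 : min (χ.toFun (w + v)) (χ.toFun (-v)) ≤ χ.toFun w := by
          rw [h1]; exact χ.ultra _ _
        rw [χ.toFun_neg] at h2
        rcases min_le_iff.1 h2 with h3 | h3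
        · exact absurd h3 (not_le.2 hc)
        · exact absurd h3 (not_le.2 hlt)
      · have := χ.ultra w v
        rwa [min_eq_left hlt.le] at this
    rw [add_comm] at h1
    rw [h1]
    exact min_eq_left hlt.le

/-- The norm of a finite sum is at least the min of the norms. -/
lemma le_toFun_sum (χ : NAnorm k V) {ι : Type*} (s : Finset ι) (g : ι → V) :
    (⨅ i ∈ s, χ.toFun (g i)) ≤ χ.toFun (∑ i ∈ s, g i) := by
  classical
  induction s using Finset.induction_on with
  | empty => simp [χ.toFun_zero]
  | @insert a s hns ih =>
    rw [Finset.sum_insert hns]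
    refine le_trans ?_ (χ.ultra _ _)
    refine le_min ?_ ?_
    · exact iInf₂_le a (Finset.mem_insert_self a s)
    · refine le_trans ?_ ih
      exact le_iInf₂ fun i hi => iInf₂_le i (Finset.mem_insert_of_mem hi)

lemma exists_eq_biInf {ι : Type*} (s : Finset ι) (hs : s.Nonempty) (f : ι → EReal) :
    ∃ i ∈ s, (⨅ j ∈ s, f j) = f i := by
  obtain ⟨i, hi, h⟩ := s.exists_mem_eq_inf' hs f
  exact ⟨i, hi, by rw [← Finset.inf_eq_iInf, ← Finset.inf'_eq_inf hs, h]⟩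

lemma toFun_sum_eq_iInf_of_distinct (χ : NAnorm k V) {ι : Type*} (s : Finset ι) (g : ι → V)
    (hd : ∀ i ∈ s, ∀ j ∈ s, i ≠ j → χ.toFun (g i) ≠ χ.toFun (g j))
    (htop : ∀ i ∈ s, χ.toFun (g i) ≠ ⊤) :
    χ.toFun (∑ i ∈ s, g i) = ⨅ i ∈ s, χ.toFun (g i) := by
  classical
  induction s using Finset.induction_on with
  | empty => simp [χ.toFun_zero]
  | @insert a s hns ih =>
    rcases s.eq_empty_or_nonempty with rfl | hsne
    · simp
    · have ih' := ih (fun i hi j hj hij => hd i (Finset.mem_insert_of_mem hi) j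
        (Finset.mem_insert_of_mem hj) hij) (fun i hi => htop i (Finset.mem_insert_of_mem hi))
      obtain ⟨i0, hi0, heq⟩ := exists_eq_biInf s hsne (fun i => χ.toFun (g i))
      have hne : χ.toFun (g a) ≠ χ.toFun (∑ i ∈ s, g i) := by
        rw [ih', heq]
        exact hd a (Finset.mem_insert_self a s) i0 (Finset.mem_insert_of_mem hi0)
          (by rintro rfl; exact hns hi0)
      rw [Finset.sum_insert hns, χ.ultra_eq hne, ih', Finset.iInf_insert]

lemma linearIndependent_of_distinct (χ : NAnorm k V) {ι : Type*} (f : ι → V)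
    (h0 : ∀ i, f i ≠ 0) (hd : ∀ i j, i ≠ j → χ.toFun (f i) ≠ χ.toFun (f j)) :
    LinearIndependent k f := by
  classical
  rw [linearIndependent_iff]
  intro l hl
  by_contra hne
  have hsupp : l.support.Nonempty := Finsupp.support_nonempty_iff.2 hne
  have hval : ∀ i ∈ l.support, χ.toFun (l i • f i) = χ.toFun (f i) := fun i hi =>
    χ.smul_eq _ _ (Finsupp.mem_support_iff.1 hi)
  have hsum : χ.toFun (∑ i ∈ l.support, l i • f i) = ⨅ i ∈ l.support, χ.toFun (l i • f i) := by
    refine χ.toFun_sum_eq_iInf_of_distinct _ _ ?_ ?_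
    · intro i hi j hj hij
      rw [hval i hi, hval j hj]
      exact hd i j hij
    · intro i hi
      rw [hval i hi]
      exact fun h => h0 i ((χ.top_iff _).1 h)
  have htot : (∑ i ∈ l.support, l i • f i) = 0 := by
    rw [← hl, Finsupp.linearCombination_apply, Finsupp.sum]
  rw [htot, χ.toFun_zero] at hsum
  obtain ⟨i0, hi0, heq⟩ := exists_eq_biInf l.support hsupp (fun i => χ.toFun (l i • f i))
  rw [heq, hval i0 hi0] at hsum
  exact h0 i0 ((χ.top_iff _).1 hsum.symm)

/-- The set of values of a norm on nonzero vectors. -/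
def valueSet (χ : NAnorm k V) : Set EReal := {e : EReal | ∃ v, v ≠ 0 ∧ χ.toFun v = e}

lemma valueSet_finite (χ : NAnorm k V) [FiniteDimensional k V] : χ.valueSet.Finite := by
  classical
  by_contra hinf
  obtain ⟨t, hts, hcard⟩ :=
    Set.Infinite.exists_subset_card_eq hinf (Module.finrank k V + 1)
  have hch : ∀ e : {x // x ∈ t}, ∃ v, v ≠ 0 ∧ χ.toFun v = (e : EReal) := fun e => hts e.2
  choose f h0 heq using hch
  have hLI : LinearIndependent k f := by
    refine χ.linearIndependent_of_distinct f h0 ?_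
    intro i j hij
    rw [heq i, heq j]
    exact fun h => hij (Subtype.ext (by exact_mod_cast h))
  have hle := LinearIndependent.fintype_card_le_finrank hLI
  rw [Fintype.card_coe, hcard] at hle
  omega

lemma exists_max (χ : NAnorm k V) [FiniteDimensional k V] (hV : ∃ v : V, v ≠ 0) :
    ∃ v, v ≠ 0 ∧ ∀ w, w ≠ 0 → χ.toFun w ≤ χ.toFun v := by
  obtain ⟨v0, hv0⟩ := hV
  have hne : χ.valueSet.Nonempty := ⟨χ.toFun v0, v0, hv0, rfl⟩
  have hmem := Set.Nonempty.csSup_mem hne χ.valueSet_finite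
  obtain ⟨v, hv, hveq⟩ := hmem
  exact ⟨v, hv, fun w hw => hveq ▸ le_csSup χ.valueSet_finite.bddAbove ⟨w, hw, rfl⟩⟩

section Quotient

variable [FiniteDimensional k V]

omit [FiniteDimensional k V] in
lemma coset_nonempty (U : Submodule k V) (x : V ⧸ U) :
    {y : V | Submodule.Quotient.mk y = x}.Nonempty :=
  Submodule.Quotient.mk_surjective U x

lemma quotSup_attained (χ : NAnorm k V) (U : Submodule k V) (x : V ⧸ U) :
    ∃ y, Submodule.Quotient.mk y = x ∧
      χ.toFun y = sSup (χ.toFun '' {y : V | Submodule.Quotient.mk y = x}) := by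
  by_cases hx : x = 0
  · subst hx
    refine ⟨0, by simp, ?_⟩
    rw [χ.toFun_zero]
    refine le_antisymm (le_sSup ⟨0, by simp, χ.toFun_zero⟩) le_top
  · have hsub : χ.toFun '' {y : V | Submodule.Quotient.mk y = x} ⊆ χ.valueSet := by
      rintro e ⟨y, hy, rfl⟩
      refine ⟨y, fun h0 => hx ?_, rfl⟩
      rw [← hy, h0, Submodule.Quotient.mk_zero]
    have hfin := χ.valueSet_finite.subset hsub
    have hne := (coset_nonempty U x).image χ.toFun
    obtain ⟨y, hy, hval⟩ := Set.Nonempty.csSup_mem hne hfin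
    exact ⟨y, hy, hval⟩

/-- The quotient norm. -/
noncomputable def quot (χ : NAnorm k V) (U : Submodule k V) : NAnorm k (V ⧸ U) where
  toFun x := sSup (χ.toFun '' {y : V | Submodule.Quotient.mk y = x})
  ne_bot x := by
    beta_reduce
    obtain ⟨y, _, hy⟩ := χ.quotSup_attained U x
    rw [← hy]; exact χ.ne_bot y
  top_iff x := by
    beta_reduce
    constructor
    · intro h
      obtain ⟨y, hmk, hy⟩ := χ.quotSup_attained U x
      rw [← hy] at h
      rw [← hmk, (χ.top_iff y).1 h, Submodule.Quotient.mk_zero]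
    · rintro rfl
      refine le_antisymm le_top (le_sSup ⟨0, by simp, χ.toFun_zero⟩)
  smul_eq a x ha := by
    have himg : χ.toFun '' {y : V | Submodule.Quotient.mk y = a • x}
        = χ.toFun '' {y : V | Submodule.Quotient.mk y = x} := by
      ext e
      constructor
      · rintro ⟨y, hy, rfl⟩
        refine ⟨a⁻¹ • y, ?_, χ.smul_eq a⁻¹ y (inv_ne_zero ha)⟩
        rw [Set.mem_setOf_eq, Submodule.Quotient.mk_smul, hy, smul_smul, inv_mul_cancel₀ ha,
          one_smul]
      · rintro ⟨y, hy, rfl⟩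
        refine ⟨a • y, ?_, χ.smul_eq a y ha⟩
        rw [Set.mem_setOf_eq, Submodule.Quotient.mk_smul, hy]
    beta_reduce
    rw [himg]
  ultra x y := by
    beta_reduce
    obtain ⟨yx, hyx, hx⟩ := χ.quotSup_attained U x
    obtain ⟨yy, hyy, hy⟩ := χ.quotSup_attained U y
    rw [← hx, ← hy]
    refine le_trans (χ.ultra yx yy) (le_sSup ⟨yx + yy, ?_, rfl⟩)
    rw [Set.mem_setOf_eq, Submodule.Quotient.mk_add, hyx, hyy]

lemma quot_le (χ : NAnorm k V) (U : Submodule k V) {y : V} {x : V ⧸ U}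
    (h : Submodule.Quotient.mk y = x) : χ.toFun y ≤ (χ.quot U).toFun x :=
  le_sSup ⟨y, h, rfl⟩

lemma quot_attained (χ : NAnorm k V) (U : Submodule k V) (x : V ⧸ U) :
    ∃ y, Submodule.Quotient.mk y = x ∧ χ.toFun y = (χ.quot U).toFun x :=
  χ.quotSup_attained U x

end Quotient

lemma iInf_fin_succ_cond {α : Type*} [CompleteLattice α] {n : ℕ} (p : Fin (n + 1) → Prop)
    (f : Fin (n + 1) → α) :
    (⨅ i ∈ {i | p i}, f i) =
      (⨅ _ : p 0, f 0) ⊓ ⨅ j ∈ {j | p (Fin.succ j)}, f (Fin.succ j) := by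
  refine le_antisymm (le_inf ?_ ?_) ?_
  · exact le_iInf fun h => iInf₂_le 0 h
  · exact le_iInf₂ fun j hj => iInf₂_le (Fin.succ j) hj
  · refine le_iInf₂ fun i hi => ?_
    rcases Fin.eq_zero_or_eq_succ i with rfl | ⟨j, rfl⟩
    · exact inf_le_left.trans (iInf_le _ hi)
    · exact inf_le_right.trans (iInf₂_le j hi)

section Induction

variable [FiniteDimensional k V]

lemma joint_lift (χ χ' : NAnorm k V) {v : V} (hv : v ≠ 0)
    (hmax : ∀ w, w ≠ 0 → χ.toFun w ≤ χ.toFun v) (x : V ⧸ Submodule.span k {v}) :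
    ∃ y, Submodule.Quotient.mk y = x ∧
      χ.toFun y = (χ.quot (Submodule.span k {v})).toFun x ∧
      χ'.toFun y = (χ'.quot (Submodule.span k {v})).toFun x := by
  by_cases hx : x = 0
  · subst hx
    refine ⟨0, by simp, ?_, ?_⟩
    · rw [χ.toFun_zero, ((χ.quot (Submodule.span k {v})).top_iff 0).2 rfl]
    · rw [χ'.toFun_zero, ((χ'.quot (Submodule.span k {v})).top_iff 0).2 rfl]
  · have hA : ({y : V | Submodule.Quotient.mk y = x ∧
        χ.toFun y = (χ.quot (Submodule.span k {v})).toFun x}).Nonempty := by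
      obtain ⟨y, h1, h2⟩ := χ.quot_attained (Submodule.span k {v}) x
      exact ⟨y, h1, h2⟩
    have hAnz : ∀ y ∈ {y : V | Submodule.Quotient.mk y = x ∧
        χ.toFun y = (χ.quot (Submodule.span k {v})).toFun x}, y ≠ 0 := by
      rintro y ⟨h1, _⟩ rfl
      exact hx (by rw [← h1, Submodule.Quotient.mk_zero])
    have hfin : (χ'.toFun '' {y : V | Submodule.Quotient.mk y = x ∧
        χ.toFun y = (χ.quot (Submodule.span k {v})).toFun x}).Finite := by
      refine χ'.valueSet_finite.subset ?_
      rintro e ⟨y, hy, rfl⟩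
      exact ⟨y, hAnz y hy, rfl⟩
    obtain ⟨yx, hyxA, hsup⟩ := Set.Nonempty.csSup_mem (Set.Nonempty.image _ hA) hfin
    obtain ⟨hmk, hχ⟩ := hyxA
    refine ⟨yx, hmk, hχ, le_antisymm (χ'.quot_le _ hmk) ?_⟩
    obtain ⟨z, hzmk, hz⟩ := χ'.quot_attained (Submodule.span k {v}) x
    rw [← hz]
    by_contra hlt
    push_neg at hlt
    have hzyx : z ≠ yx := by
      rintro rfl
      exact lt_irrefl _ hlt
    have hu0 : z - yx ≠ 0 := sub_ne_zero.2 hzyx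
    have huU : z - yx ∈ Submodule.span k {v} := by
      rw [← Submodule.Quotient.eq]
      rw [hzmk, hmk]
    have hχu : χ.toFun (z - yx) = χ.toFun v := by
      obtain ⟨cc, hc⟩ := Submodule.mem_span_singleton.1 huU
      have hc0 : cc ≠ 0 := by rintro rfl; rw [zero_smul] at hc; exact hu0 hc.symm
      rw [← hc]
      exact χ.smul_eq cc v hc0
    have hyx0 : yx ≠ 0 := hAnz yx ⟨hmk, hχ⟩
    have hle : χ.toFun yx ≤ χ.toFun (z - yx) := (hmax yx hyx0).trans_eq hχu.symm
    have hz_ge : χ.toFun yx ≤ χ.toFun z := by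
      have hzr : yx + (z - yx) = z := by abel
      calc χ.toFun yx = min (χ.toFun yx) (χ.toFun (z - yx)) := (min_eq_left hle).symm
        _ ≤ χ.toFun (yx + (z - yx)) := χ.ultra _ _
        _ = χ.toFun z := by rw [hzr]
    have hzA : z ∈ {y : V | Submodule.Quotient.mk y = x ∧
        χ.toFun y = (χ.quot (Submodule.span k {v})).toFun x} :=
      ⟨hzmk, le_antisymm (χ.quot_le _ hzmk) (hχ ▸ hz_ge)⟩
    have hcon : χ'.toFun z ≤ χ'.toFun yx := hsup ▸ le_csSup hfin.bddAbove ⟨z, hzA, rfl⟩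
    exact absurd hcon (not_le.2 hlt)

lemma orth_of_quot (ψ : NAnorm k V) {v : V} (hv : v ≠ 0) {n : ℕ}
    (b' : Module.Basis (Fin n) k (V ⧸ Submodule.span k {v}))
    (horth : (ψ.quot (Submodule.span k {v})).IsOrthogonal b')
    (bl : Fin n → V) (hmk : ∀ j, Submodule.Quotient.mk (bl j) = b' j)
    (hval : ∀ j, ψ.toFun (bl j) = (ψ.quot (Submodule.span k {v})).toFun (b' j))
    (a : Fin (n + 1) → k) :
    ψ.toFun (∑ i, a i • (Fin.cons v bl : Fin (n + 1) → V) i) =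
      ⨅ i ∈ {i | a i ≠ 0}, ψ.toFun ((Fin.cons v bl : Fin (n + 1) → V) i) := by
  set w := ∑ j : Fin n, a j.succ • bl j with hwdef
  have hsum : (∑ i, a i • (Fin.cons v bl : Fin (n + 1) → V) i) = a 0 • v + w := by
    rw [Fin.sum_univ_succ]
    simp [hwdef]
  have hwmk : Submodule.Quotient.mk w = ∑ j : Fin n, a j.succ • b' j := by
    rw [← Submodule.mkQ_apply, hwdef, map_sum]
    simp only [map_smul, Submodule.mkQ_apply]
    exact Finset.sum_congr rfl fun j _ => by rw [hmk j]
  have hquot : (ψ.quot (Submodule.span k {v})).toFun (Submodule.Quotient.mk w)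
      = ⨅ j ∈ {j | a j.succ ≠ 0}, ψ.toFun (bl j) := by
    rw [hwmk, horth (fun j => a j.succ)]
    exact iInf_congr fun j => iInf_congr fun hj => (hval j).symm
  have hwle : ψ.toFun w ≤ ⨅ j ∈ {j | a j.succ ≠ 0}, ψ.toFun (bl j) := by
    rw [← hquot]
    exact ψ.quot_le _ rfl
  have hwge : (⨅ j ∈ {j | a j.succ ≠ 0}, ψ.toFun (bl j)) ≤ ψ.toFun w := by
    refine le_trans ?_ (ψ.le_toFun_sum Finset.univ (fun j => a j.succ • bl j))
    refine le_iInf₂ fun j _ => ?_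
    by_cases hj : a j.succ = 0
    · rw [hj, zero_smul, ψ.toFun_zero]
      exact le_top
    · rw [ψ.smul_eq _ _ hj]
      exact iInf₂_le j hj
  have hwval : ψ.toFun w = ⨅ j ∈ {j | a j.succ ≠ 0}, ψ.toFun (bl j) :=
    le_antisymm hwle hwge
  rw [hsum, iInf_fin_succ_cond (fun i => a i ≠ 0)
    (fun i => ψ.toFun ((Fin.cons v bl : Fin (n + 1) → V) i))]
  simp only [Fin.cons_zero, Fin.cons_succ]
  rw [← hwval]
  by_cases h0 : a 0 = 0
  · rw [h0, zero_smul, zero_add, iInf_neg (by simp), top_inf_eq]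
  · rw [iInf_pos h0]
    have hav : ψ.toFun (a 0 • v) = ψ.toFun v := ψ.smul_eq _ _ h0
    rcases eq_or_ne (ψ.toFun v) (ψ.toFun w) with heq | hne
    · have hlift : Submodule.Quotient.mk (a 0 • v + w)
          = (Submodule.Quotient.mk w : V ⧸ Submodule.span k {v}) := by
        rw [Submodule.Quotient.mk_add,
          (Submodule.Quotient.mk_eq_zero (Submodule.span k {v})).2
            (Submodule.mem_span_singleton.2 ⟨a 0, rfl⟩), zero_add]
      have hub : ψ.toFun (a 0 • v + w) ≤ ψ.toFun w := by
        have h1 := ψ.quot_le (Submodule.span k {v}) hlift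
        rw [hquot, ← hwval] at h1
        exact h1
      refine le_antisymm (le_inf (heq ▸ hub) hub) ?_
      refine le_trans ?_ (ψ.ultra (a 0 • v) w)
      rw [hav]
    · have hne' : ψ.toFun (a 0 • v) ≠ ψ.toFun w := by rw [hav]; exact hne
      rw [ψ.ultra_eq hne', hav]

end Induction

universe uW

lemma exists_joint_aux (n : ℕ) :
    ∀ (W : Type uW) [AddCommGroup W] [Module k W] [FiniteDimensional k W]
      (χ χ' : NAnorm k W), Module.finrank k W = n →
      ∃ b : Module.Basis (Fin n) k W, χ.IsOrthogonal b ∧ χ'.IsOrthogonal b := by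
  induction n with
  | zero =>
    intro W _ _ _ χ χ' hrank
    have hsub : Subsingleton W := Module.finrank_zero_iff.1 hrank
    have hempty : IsEmpty (Fin 0) := inferInstance
    refine ⟨Module.Basis.empty W, ?_, ?_⟩ <;>
    · intro a
      have h1 : (∑ i, a i • (Module.Basis.empty W : Module.Basis (Fin 0) k W) i) = 0 := by
        simp
      rw [h1]
      simp [toFun_zero, iInf_of_empty]
  | succ n ih =>
    intro W _ _ _ χ χ' hrank
    have hpos : 0 < Module.finrank k W := by omega
    have hnt : Nontrivial W := Module.finrank_pos_iff.1 hpos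
    obtain ⟨v, hv, hmax⟩ := χ.exists_max (exists_ne 0)
    have hU1 : Module.finrank k (Submodule.span k {v}) = 1 := finrank_span_singleton hv
    have hrankQ : Module.finrank k (W ⧸ Submodule.span k {v}) = n := by
      have hq := Submodule.finrank_quotient_add_finrank (Submodule.span k {v})
      omega
    obtain ⟨b', hb1, hb2⟩ := ih (W ⧸ Submodule.span k {v})
      (χ.quot (Submodule.span k {v})) (χ'.quot (Submodule.span k {v})) hrankQ
    have hlift := fun j => χ.joint_lift χ' hv hmax (b' j)
    choose bl hmkl hχl hχ'l using hlift
    have hli : LinearIndependent k (Fin.cons v bl : Fin (n + 1) → W) := by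
      rw [Fintype.linearIndependent_iff]
      intro g hg
      have hgq : ∑ j : Fin n, g j.succ • b' j = 0 := by
        have h2 := congrArg (Submodule.span k {v}).mkQ hg
        rw [map_sum, map_zero] at h2
        rw [← h2]
        rw [Fin.sum_univ_succ]
        simp only [Fin.cons_zero, Fin.cons_succ, map_smul, Submodule.mkQ_apply]
        rw [(Submodule.Quotient.mk_eq_zero (Submodule.span k {v})).2
          (Submodule.mem_span_singleton_self v)]
        rw [smul_zero, zero_add]
        exact (Finset.sum_congr rfl fun j _ => by rw [hmkl j]).symm
      have hgs : ∀ j : Fin n, g j.succ = 0 :=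
        Fintype.linearIndependent_iff.1 b'.linearIndependent _ hgq
      have hg0 : g 0 = 0 := by
        have h3 : g 0 • v = 0 := by
          have h4 := hg
          rw [Fin.sum_univ_succ] at h4
          simp only [Fin.cons_zero, Fin.cons_succ] at h4
          have h5 : ∑ j : Fin n, g j.succ • bl j = 0 := by
            refine Finset.sum_eq_zero fun j _ => ?_
            rw [hgs j, zero_smul]
          rw [h5, add_zero] at h4
          exact h4
        rcases smul_eq_zero.1 h3 with h | h
        · exact h
        · exact absurd h hv
      intro i
      rcases Fin.eq_zero_or_eq_succ i with rfl | ⟨j, rfl⟩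
      · exact hg0
      · exact hgs j
    have hcard : Fintype.card (Fin (n + 1)) = Module.finrank k W := by
      simp [hrank]
    refine ⟨basisOfLinearIndependentOfCardEqFinrank hli hcard, ?_, ?_⟩
    · intro a
      rw [coe_basisOfLinearIndependentOfCardEqFinrank]
      exact χ.orth_of_quot hv b' hb1 bl hmkl hχl a
    · intro a
      rw [coe_basisOfLinearIndependentOfCardEqFinrank]
      exact χ'.orth_of_quot hv b' hb2 bl hmkl hχ'l a

lemma exists_joint [FiniteDimensional k V] (χ χ' : NAnorm k V) :
    ∃ b : Module.Basis (Fin (Module.finrank k V)) k V,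
      χ.IsOrthogonal b ∧ χ'.IsOrthogonal b :=
  exists_joint_aux (Module.finrank k V) V χ χ' rfl

/-! ### Multiset determination from upper counts -/

lemma countP_split {α : Type*} (M : Multiset α) (p q r : α → Prop)
    [DecidablePred p] [DecidablePred q] [DecidablePred r]
    (h : ∀ y ∈ M, (p y ↔ q y ∨ r y) ∧ ¬(q y ∧ r y)) :
    M.countP p = M.countP q + M.countP r := by
  induction M using Multiset.induction_on with
  | empty => simp
  | cons x s ih =>
    rw [Multiset.countP_cons, Multiset.countP_cons, Multiset.countP_cons,
      ih fun y hy => h y (Multiset.mem_cons_of_mem hy)]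
    obtain ⟨hiff, hnand⟩ := h x (Multiset.mem_cons_self x s)
    by_cases hq : q x
    · have hp : p x := hiff.2 (Or.inl hq)
      have hr : ¬ r x := fun hr => hnand ⟨hq, hr⟩
      simp only [hp, hq, hr, if_true, if_false]
      omega
    · by_cases hr : r x
      · have hp : p x := hiff.2 (Or.inr hr)
        simp only [hp, hq, hr, if_true, if_false]
        omega
      · have hp : ¬ p x := fun hp => (hiff.1 hp).elim hq hr
        simp only [hp, hq, hr, if_false]
        omega

lemma exists_gap (F : Finset ℝ) (a : ℝ) :
    ∃ a', a < a' ∧ ∀ c ∈ F, a < c → a' ≤ c := by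
  classical
  rcases (F.filter (fun c => a < c)).eq_empty_or_nonempty with he | hne
  · refine ⟨a + 1, by linarith, fun c hc hac => ?_⟩
    exact absurd (Finset.mem_filter.2 ⟨hc, hac⟩) (by simp [he])
  · refine ⟨(F.filter (fun c => a < c)).min' hne, ?_, ?_⟩
    · exact (Finset.mem_filter.1 ((F.filter (fun c => a < c)).min'_mem hne)).2
    · intro c hc hac
      exact Finset.min'_le _ _ (Finset.mem_filter.2 ⟨hc, hac⟩)

lemma multiset_eq_of_counts {M M' : Multiset (ℝ × ℝ)}
    (h : ∀ s t : ℝ, M.countP (fun x => s ≤ x.1 ∧ t ≤ x.2)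
      = M'.countP (fun x => s ≤ x.1 ∧ t ≤ x.2)) : M = M' := by
  rw [Multiset.ext]
  intro z
  obtain ⟨a, b⟩ := z
  obtain ⟨a', ha1, ha2⟩ := exists_gap ((M + M').toFinset.image Prod.fst) a
  obtain ⟨b', hb1, hb2⟩ := exists_gap ((M + M').toFinset.image Prod.snd) b
  have key : ∀ K : Multiset (ℝ × ℝ), (∀ y ∈ K, y ∈ M + M') →
      K.countP (fun x => a ≤ x.1 ∧ b ≤ x.2) + K.countP (fun x => a' ≤ x.1 ∧ b' ≤ x.2)
      = K.countP (fun x => x = (a, b)) + K.countP (fun x => a' ≤ x.1 ∧ b ≤ x.2)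
        + K.countP (fun x => a ≤ x.1 ∧ b' ≤ x.2) := by
    intro K hK
    have hmem1 : ∀ y ∈ K, a < y.1 → a' ≤ y.1 := fun y hy hlt =>
      ha2 y.1 (Finset.mem_image.2 ⟨y, Multiset.mem_toFinset.2 (hK y hy), rfl⟩) hlt
    have hmem2 : ∀ y ∈ K, b < y.2 → b' ≤ y.2 := fun y hy hlt =>
      hb2 y.2 (Finset.mem_image.2 ⟨y, Multiset.mem_toFinset.2 (hK y hy), rfl⟩) hlt
    have hsplit1 : ∀ t0 : ℝ,
        K.countP (fun x => a ≤ x.1 ∧ t0 ≤ x.2)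
        = K.countP (fun x => x.1 = a ∧ t0 ≤ x.2)
          + K.countP (fun x => a' ≤ x.1 ∧ t0 ≤ x.2) := by
      intro t0
      refine countP_split K _ _ _ fun y hy => ⟨⟨fun hw => ?_, fun hor => ?_⟩, ?_⟩
      · rcases eq_or_lt_of_le hw.1 with heq | hlt
        · exact Or.inl ⟨heq.symm, hw.2⟩
        · exact Or.inr ⟨hmem1 y hy hlt, hw.2⟩
      · rcases hor with ⟨h1, h2⟩ | ⟨h1, h2⟩
        · exact ⟨h1.ge, h2⟩
        · exact ⟨le_trans ha1.le h1, h2⟩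
      · rintro ⟨⟨h1, _⟩, ⟨h1', _⟩⟩
        rw [h1] at h1'
        exact absurd h1' (not_le.2 ha1)
    have e2 : K.countP (fun x => x.1 = a ∧ b ≤ x.2)
        = K.countP (fun x => x = (a, b)) + K.countP (fun x => x.1 = a ∧ b' ≤ x.2) := by
      refine countP_split K _ _ _ fun y hy => ⟨⟨fun hw => ?_, fun hor => ?_⟩, ?_⟩
      · rcases eq_or_lt_of_le hw.2 with heq | hlt
        · exact Or.inl (Prod.ext hw.1 heq.symm)
        · exact Or.inr ⟨hw.1, hmem2 y hy hlt⟩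
      · rcases hor with rfl | ⟨h1, h2⟩
        · exact ⟨rfl, le_refl _⟩
        · exact ⟨h1, le_trans hb1.le h2⟩
      · rintro ⟨rfl, ⟨_, h2⟩⟩
        exact absurd h2 (not_le.2 hb1)
    have e1 := hsplit1 b
    have e3 := hsplit1 b'
    omega
  have hM := key M (fun y hy => Multiset.mem_add.2 (Or.inl hy))
  have hM' := key M' (fun y hy => Multiset.mem_add.2 (Or.inr hy))
  have h00 := h a b
  have h11 := h a' b'
  have h10 := h a' b
  have h01 := h a b'
  have hcnt : M.countP (fun x => x = (a, b)) = M'.countP (fun x => x = (a, b)) := by omega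
  have hcM : M.count (a, b) = M.countP (fun x => x = (a, b)) :=
    Multiset.countP_congr rfl (fun y _ => by
      rw [eq_iff_iff]; exact ⟨fun h => h.symm, fun h => h.symm⟩)
  have hcM' : M'.count (a, b) = M'.countP (fun x => x = (a, b)) :=
    Multiset.countP_congr rfl (fun y _ => by
      rw [eq_iff_iff]; exact ⟨fun h => h.symm, fun h => h.symm⟩)
  rw [hcM, hcM', hcnt]

/-! ### The joint filtration submodules and spectrum invariance -/

/-- The submodule of vectors with `χ ≥ s` and `χ' ≥ t`. -/
def jointSub (χ χ' : NAnorm k V) (s t : ℝ) : Submodule k V where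
  carrier := {v : V | (s : EReal) ≤ χ.toFun v ∧ (t : EReal) ≤ χ'.toFun v}
  add_mem' := by
    rintro x y ⟨hx1, hx2⟩ ⟨hy1, hy2⟩
    exact ⟨le_trans (le_min hx1 hy1) (χ.ultra x y), le_trans (le_min hx2 hy2) (χ'.ultra x y)⟩
  zero_mem' := by
    simp only [Set.mem_setOf_eq, χ.toFun_zero, χ'.toFun_zero]
    exact ⟨le_top, le_top⟩
  smul_mem' := by
    intro c x hx
    by_cases hc : c = 0
    · rw [hc, zero_smul]
      simp only [Set.mem_setOf_eq, χ.toFun_zero, χ'.toFun_zero]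
      exact ⟨le_top, le_top⟩
    · rw [Set.mem_setOf_eq, χ.smul_eq c x hc, χ'.smul_eq c x hc]
      exact hx

lemma mem_jointSub {χ χ' : NAnorm k V} {s t : ℝ} {v : V} :
    v ∈ jointSub χ χ' s t ↔ (s : EReal) ≤ χ.toFun v ∧ (t : EReal) ≤ χ'.toFun v := Iff.rfl

lemma coe_le_toFun_iff (χ : NAnorm k V) {v : V} (hv : v ≠ 0) {s : ℝ} :
    (s : EReal) ≤ χ.toFun v ↔ s ≤ χ.val v := by
  have htop : χ.toFun v ≠ ⊤ := fun h => hv ((χ.top_iff v).1 h)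
  have hbot : χ.toFun v ≠ ⊥ := χ.ne_bot v
  rw [← EReal.coe_toReal htop hbot, EReal.coe_le_coe_iff]
  rfl

lemma jointSub_eq_span {χ χ' : NAnorm k V} {N : ℕ} {b : Module.Basis (Fin N) k V}
    (hb : χ.IsOrthogonal b) (hb' : χ'.IsOrthogonal b) (s t : ℝ) :
    jointSub χ χ' s t = Submodule.span k
      (b '' {j | (s : EReal) ≤ χ.toFun (b j) ∧ (t : EReal) ≤ χ'.toFun (b j)}) := by
  refine le_antisymm ?_ ?_
  · intro v hv
    obtain ⟨hv1, hv2⟩ := hv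
    have hrepr : (∑ i, b.repr v i • b i) = v := b.sum_repr v
    have h1 : χ.toFun v = ⨅ i ∈ {i | b.repr v i ≠ 0}, χ.toFun (b i) := by
      have := hb (fun i => b.repr v i)
      rwa [hrepr] at this
    have h2 : χ'.toFun v = ⨅ i ∈ {i | b.repr v i ≠ 0}, χ'.toFun (b i) := by
      have := hb' (fun i => b.repr v i)
      rwa [hrepr] at this
    have hsupp : ∀ j, b.repr v j ≠ 0 →
        (s : EReal) ≤ χ.toFun (b j) ∧ (t : EReal) ≤ χ'.toFun (b j) := by
      intro j hj
      constructor
      · exact le_trans (h1 ▸ hv1) (iInf₂_le j hj)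
      · exact le_trans (h2 ▸ hv2) (iInf₂_le j hj)
    rw [← hrepr]
    refine Submodule.sum_mem _ fun j _ => ?_
    by_cases hj : b.repr v j = 0
    · rw [hj, zero_smul]
      exact Submodule.zero_mem _
    · exact Submodule.smul_mem _ _ (Submodule.subset_span ⟨j, hsupp j hj, rfl⟩)
  · rw [Submodule.span_le]
    rintro _ ⟨j, hj, rfl⟩
    exact hj

lemma finrank_jointSub {χ χ' : NAnorm k V} {N : ℕ} {b : Module.Basis (Fin N) k V}
    (hb : χ.IsOrthogonal b) (hb' : χ'.IsOrthogonal b) (s t : ℝ) :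
    Module.finrank k (jointSub χ χ' s t) = (Finset.univ.filter
      (fun j => (s : EReal) ≤ χ.toFun (b j) ∧ (t : EReal) ≤ χ'.toFun (b j))).card := by
  classical
  rw [jointSub_eq_span hb hb' s t]
  have hsets : {j : Fin N | (s : EReal) ≤ χ.toFun (b j) ∧ (t : EReal) ≤ χ'.toFun (b j)}
      = ↑(Finset.univ.filter (fun j => (s : EReal) ≤ χ.toFun (b j) ∧
          (t : EReal) ≤ χ'.toFun (b j))) := by
    ext j
    constructor
    · intro hj
      exact Finset.mem_coe.2 (Finset.mem_filter.2 ⟨Finset.mem_univ j, hj⟩)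
    · intro hj
      exact (Finset.mem_filter.1 (Finset.mem_coe.1 hj)).2
  have hset : b '' {j | (s : EReal) ≤ χ.toFun (b j) ∧ (t : EReal) ≤ χ'.toFun (b j)}
      = ↑((Finset.univ.filter (fun j => (s : EReal) ≤ χ.toFun (b j) ∧
          (t : EReal) ≤ χ'.toFun (b j))).image b) := by
    rw [Finset.coe_image, hsets]
  rw [hset]
  have hli : LinearIndependent k ((↑) : ((Finset.univ.filter
      (fun j => (s : EReal) ≤ χ.toFun (b j) ∧ (t : EReal) ≤ χ'.toFun (b j))).image b : Finset V)
        → V) := by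
    refine LinearIndepOn.linearIndependent (LinearIndepOn.mono b.linearIndependent.linearIndepOn_id ?_)
    intro x hx
    obtain ⟨j, _, rfl⟩ := Finset.mem_image.1 (Finset.mem_coe.1 hx)
    exact Set.mem_range_self j
  rw [finrank_span_finset_eq_card hli, Finset.card_image_of_injective _ b.injective]
  congr!

lemma pair_multiset_invariant [FiniteDimensional k V] (χ χ' : NAnorm k V) {N : ℕ}
    (b c : Module.Basis (Fin N) k V) (hb : χ.IsOrthogonal b) (hb' : χ'.IsOrthogonal b)
    (hc : χ.IsOrthogonal c) (hc' : χ'.IsOrthogonal c) :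
    Multiset.map (fun j => (χ.val (b j), χ'.val (b j))) Finset.univ.val
      = Multiset.map (fun j => (χ.val (c j), χ'.val (c j))) Finset.univ.val := by
  classical
  refine multiset_eq_of_counts fun s t => ?_
  rw [Multiset.countP_map, Multiset.countP_map]
  have hcard : ∀ d : Module.Basis (Fin N) k V, χ.IsOrthogonal d → χ'.IsOrthogonal d →
      Multiset.card (Finset.univ.val.filter
        (fun j => s ≤ χ.val (d j) ∧ t ≤ χ'.val (d j)))
      = Module.finrank k (jointSub χ χ' s t) := by
    intro d hd hd'
    have h1 : Multiset.filter (fun j => s ≤ χ.val (d j) ∧ t ≤ χ'.val (d j)) Finset.univ.val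
        = (Finset.filter (fun j => (s : EReal) ≤ χ.toFun (d j) ∧
            (t : EReal) ≤ χ'.toFun (d j)) Finset.univ).val := by
      rw [Finset.filter_val]
      apply Multiset.filter_congr
      intro j _
      rw [χ.coe_le_toFun_iff (d.ne_zero j), χ'.coe_le_toFun_iff (d.ne_zero j)]
    rw [h1, finrank_jointSub hd hd' s t, Finset.card_val]
    congr!
  rw [hcard b hb hb', hcard c hc hc']

lemma toFun_ne_top (χ : NAnorm k V) {v : V} (hv : v ≠ 0) : χ.toFun v ≠ ⊤ :=
  fun h => hv ((χ.top_iff v).1 h)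

lemma inf_isOrthogonal {χ χ' : NAnorm k V} {N : ℕ} {b : Module.Basis (Fin N) k V}
    (hb : χ.IsOrthogonal b) (hb' : χ'.IsOrthogonal b) : (χ.inf χ').IsOrthogonal b := by
  intro a
  have hdef : (χ.inf χ').toFun (∑ i, a i • b i)
      = min (χ.toFun (∑ i, a i • b i)) (χ'.toFun (∑ i, a i • b i)) := rfl
  rw [hdef, hb a, hb' a]
  have hbody : ∀ i, (χ.inf χ').toFun (b i) = min (χ.toFun (b i)) (χ'.toFun (b i)) :=
    fun i => rfl
  refine le_antisymm ?_ ?_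
  · refine le_iInf₂ fun i hi => ?_
    rw [hbody i]
    exact le_min ((min_le_left _ _).trans (iInf₂_le i hi))
      ((min_le_right _ _).trans (iInf₂_le i hi))
  · refine le_min ?_ ?_
    · refine le_iInf₂ fun i hi => ?_
      exact le_trans (iInf₂_le i hi) (by rw [hbody i]; exact min_le_left _ _)
    · refine le_iInf₂ fun i hi => ?_
      exact le_trans (iInf₂_le i hi) (by rw [hbody i]; exact min_le_right _ _)

lemma inf_val {χ χ' : NAnorm k V} {v : V} (hv : v ≠ 0) :
    (χ.inf χ').val v = min (χ.val v) (χ'.val v) := by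
  have h : (χ.inf χ').toFun v = min (χ.toFun v) (χ'.toFun v) := rfl
  unfold val
  rw [h]
  rcases min_cases (χ.toFun v) (χ'.toFun v) with ⟨h1, h2⟩ | ⟨h1, h2⟩
  · rw [h1]
    exact (min_eq_left (EReal.toReal_le_toReal h2 (χ.ne_bot v)
      (χ'.toFun_ne_top hv))).symm
  · rw [h1]
    exact (min_eq_right (EReal.toReal_le_toReal h2.le (χ'.ne_bot v)
      (χ.toFun_ne_top hv))).symm

lemma sum_pair_eq [FiniteDimensional k V] (χ χ' : NAnorm k V) {N : ℕ}
    (b c : Module.Basis (Fin N) k V) (hb : χ.IsOrthogonal b) (hb' : χ'.IsOrthogonal b)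
    (hc : χ.IsOrthogonal c) (hc' : χ'.IsOrthogonal c) (g : ℝ × ℝ → ℝ) :
    ∑ j, g (χ.val (b j), χ'.val (b j)) = ∑ j, g (χ.val (c j), χ'.val (c j)) := by
  have h := pair_multiset_invariant χ χ' b c hb hb' hc hc'
  rw [Finset.sum_eq_multiset_sum, Finset.sum_eq_multiset_sum]
  have h2 := congrArg (fun M => (Multiset.map g M).sum) h
  simpa [Multiset.map_map, Function.comp_def] using h2

end NAnorm

/-- Pythagorean identity for the `d_p` distances:
`d_p(χ,χ')^p = d_p(χ, χ∧χ')^p + d_p(χ∧χ', χ')^p` for every `p ∈ [1,∞)`. -/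
theorem dp_pythagoras {k V : Type*} [Field k] [AddCommGroup V] [Module k V]
    [FiniteDimensional k V] (p : ℝ) (hp : 1 ≤ p) (χ χ' : NAnorm k V) :
    NAnorm.dp p χ χ' ^ p =
      NAnorm.dp p χ (χ.inf χ') ^ p + NAnorm.dp p (χ.inf χ') χ' ^ p := by
  classical
  have hp0 : p ≠ 0 := by intro h; rw [h] at hp; linarith
  obtain ⟨b0, hb0, hb0'⟩ := NAnorm.exists_joint χ χ'
  have hm0 : (χ.inf χ').IsOrthogonal b0 := NAnorm.inf_isOrthogonal hb0 hb0'
  have h3 : ∃ b : Module.Basis (Fin (Module.finrank k V)) k V,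
      χ.IsOrthogonal b ∧ χ'.IsOrthogonal b := ⟨b0, hb0, hb0'⟩
  have h1 : ∃ b : Module.Basis (Fin (Module.finrank k V)) k V,
      χ.IsOrthogonal b ∧ (χ.inf χ').IsOrthogonal b := ⟨b0, hb0, hm0⟩
  have h2 : ∃ b : Module.Basis (Fin (Module.finrank k V)) k V,
      (χ.inf χ').IsOrthogonal b ∧ χ'.IsOrthogonal b := ⟨b0, hm0, hb0'⟩
  simp only [NAnorm.dp, dif_pos h3, dif_pos h1, dif_pos h2]
  have hpow : ∀ S : ℝ, 0 ≤ S →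
      (((Module.finrank k V : ℝ)⁻¹ * S) ^ (1 / p)) ^ p = (Module.finrank k V : ℝ)⁻¹ * S := by
    intro S hS
    have hPS : (0 : ℝ) ≤ (Module.finrank k V : ℝ)⁻¹ * S := by positivity
    rw [← Real.rpow_mul hPS, one_div_mul_cancel hp0, Real.rpow_one]
  have hnn : ∀ (u w : Fin (Module.finrank k V) → ℝ),
      (0 : ℝ) ≤ ∑ j, |u j - w j| ^ p := fun u w =>
    Finset.sum_nonneg fun j _ => Real.rpow_nonneg (abs_nonneg _) p
  rw [hpow _ (hnn (fun j => χ.val (h3.choose j)) (fun j => χ'.val (h3.choose j))),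
    hpow _ (hnn (fun j => χ.val (h1.choose j)) (fun j => (χ.inf χ').val (h1.choose j))),
    hpow _ (hnn (fun j => (χ.inf χ').val (h2.choose j)) (fun j => χ'.val (h2.choose j)))]
  have t3 : ∑ j, |χ.val (h3.choose j) - χ'.val (h3.choose j)| ^ p
      = ∑ j, |χ.val (b0 j) - χ'.val (b0 j)| ^ p :=
    NAnorm.sum_pair_eq χ χ' h3.choose b0 h3.choose_spec.1 h3.choose_spec.2 hb0 hb0'
      (fun x => |x.1 - x.2| ^ p)
  have t1 : ∑ j, |χ.val (h1.choose j) - (χ.inf χ').val (h1.choose j)| ^ p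
      = ∑ j, |χ.val (b0 j) - (χ.inf χ').val (b0 j)| ^ p :=
    NAnorm.sum_pair_eq χ (χ.inf χ') h1.choose b0 h1.choose_spec.1 h1.choose_spec.2 hb0 hm0
      (fun x => |x.1 - x.2| ^ p)
  have t2 : ∑ j, |(χ.inf χ').val (h2.choose j) - χ'.val (h2.choose j)| ^ p
      = ∑ j, |(χ.inf χ').val (b0 j) - χ'.val (b0 j)| ^ p :=
    NAnorm.sum_pair_eq (χ.inf χ') χ' h2.choose b0 h2.choose_spec.1 h2.choose_spec.2 hm0 hb0'
      (fun x => |x.1 - x.2| ^ p)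
  rw [t3, t1, t2]
  have hpt : ∀ j, |χ.val (b0 j) - χ'.val (b0 j)| ^ p
      = |χ.val (b0 j) - (χ.inf χ').val (b0 j)| ^ p
        + |(χ.inf χ').val (b0 j) - χ'.val (b0 j)| ^ p := by
    intro j
    rw [NAnorm.inf_val (b0.ne_zero j)]
    rcases le_total (χ.val (b0 j)) (χ'.val (b0 j)) with h | h
    · rw [min_eq_left h, sub_self, abs_zero, Real.zero_rpow hp0, zero_add]
    · rw [min_eq_right h, sub_self, abs_zero, Real.zero_rpow hp0, add_zero]
  rw [Finset.sum_congr rfl (fun j _ => hpt j), Finset.sum_add_distrib, mul_add]
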